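/- Let G=(V,E) be a weighted temporal graph, s,z∈V, and let G' be obtained from G by adding a new source vertex s' and the edge e_0=(s',s,0,0,0). The map g that prepends e_0 to an (s,z)-path is a bijection from (s,z)-paths in G to (s',z)-paths in G', and a path P is efficient with respect to cost and arrival time in G if and only if g(P) is efficient with respect to cost and duration in G'. -/

import Mathlib

/-- A weighted temporal edge: source, destination, availability time,
traversal time, and real cost. -/
structure TEdge (V : Type) where
  src : V
  dst : V
  time : ℕ
  lam : ℕ
  cost : ℝ

variable {V : Type}

/-- Temporal compatibility of consecutive edges. -/
def TEdge.Compat (e f : TEdge V) : Prop := e.dst = f.src ∧ e.time + e.lam ≤ f.time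

/-- A temporal (s,z)-walk in the edge set `E`. -/
def IsWalk (E : Set (TEdge V)) (s z : V) (P : List (TEdge V)) : Prop :=
  P ≠ [] ∧ (∀ e ∈ P, e ∈ E) ∧ P.Chain' TEdge.Compat ∧
  (∀ e, P.head? = some e → e.src = s) ∧ (∀ e, P.getLast? = some e → e.dst = z)

/-- The sequence of vertices visited by a walk. -/
def visitedVerts (P : List (TEdge V)) : List V :=
  (P.head?.elim [] fun e => [e.src]) ++ P.map TEdge.dst

/-- A temporal path: a simple temporal walk. -/
def IsPath (E : Set (TEdge V)) (s z : V) (P : List (TEdge V)) : Prop :=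
  IsWalk E s z P ∧ (visitedVerts P).Nodup

/-- Cost of a walk. -/
noncomputable def wcost (P : List (TEdge V)) : ℝ := (P.map TEdge.cost).sum

/-- Arrival time of a walk. -/
def warr (P : List (TEdge V)) : ℕ := P.getLast?.elim 0 fun e => e.time + e.lam

/-- Starting time of a walk. -/
def wstart (P : List (TEdge V)) : ℕ := P.head?.elim 0 fun e => e.time

/-- Duration of a walk. -/
def wdur (P : List (TEdge V)) : ℕ := warr P - wstart P

/-- `Q` dominates `P` w.r.t. cost and the temporal objective `f`. -/
def Dominates (f : List (TEdge V) → ℕ) (Q P : List (TEdge V)) : Prop :=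
  (wcost Q < wcost P ∧ f Q ≤ f P) ∨ (wcost Q ≤ wcost P ∧ f Q < f P)

/-- `P` is efficient within the set `X` w.r.t. cost and objective `f`. -/
def EfficientIn (X : Set (List (TEdge V))) (f : List (TEdge V) → ℕ) (P : List (TEdge V)) : Prop :=
  P ∈ X ∧ ∀ Q ∈ X, ¬ Dominates f Q P

/-- prepending the new edge e₀ = (s',s,0,0,0) is a bijection from
(s,z)-paths of G to (s',z)-paths of G', and P is efficient w.r.t. (arrival, cost)
in G iff g(P) is efficient w.r.t. (duration, cost) in G'. -/
theorem stmt2 (E : Set (TEdge V)) (s z s' : V)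
    (hs' : ∀ e ∈ E, e.src ≠ s' ∧ e.dst ≠ s') (hss : s' ≠ s) (hs'z : s' ≠ z)
    (hsz : s ≠ z) :
    let e0 : TEdge V := ⟨s', s, 0, 0, 0⟩
    let E' : Set (TEdge V) := insert e0 E
    Set.BijOn (fun P => e0 :: P) {P | IsPath E s z P} {Q | IsPath E' s' z Q} ∧
    ∀ P, IsPath E s z P →
      (EfficientIn {Q | IsPath E s z Q} warr P ↔
        EfficientIn {Q | IsPath E' s' z Q} wdur (e0 :: P)) := by
  intro e0 E'
  -- forward map
  have fwd : ∀ P, IsPath E s z P → IsPath E' s' z (e0 :: P) := by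
    rintro P ⟨⟨hne, hE, hch, hhd, hlast⟩, hnd⟩
    obtain ⟨a, l, rfl⟩ := List.exists_cons_of_ne_nil hne
    have ha : a.src = s := hhd a rfl
    refine ⟨⟨by simp, ?_, ?_, ?_, ?_⟩, ?_⟩
    · intro e he
      rcases List.mem_cons.1 he with rfl | he
      · exact Set.mem_insert _ _
      · exact Set.mem_insert_of_mem _ (hE e he)
    · unfold List.Chain'; rw [List.isChain_cons_cons]
      exact ⟨⟨ha.symm, by simp [e0]⟩, hch⟩
    · intro e he; simp at he; subst he; rfl
    · intro e he
      rw [List.getLast?_cons_cons] at he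
      exact hlast e he
    · have hvv : visitedVerts (e0 :: a :: l) = s' :: visitedVerts (a :: l) := by
        simp [visitedVerts, ha, e0]
      rw [hvv, List.nodup_cons]
      refine ⟨?_, hnd⟩
      intro hmem'
      simp only [visitedVerts, List.head?_cons, Option.elim, List.mem_append,
        List.mem_singleton, List.mem_map] at hmem'
      rcases hmem' with h | ⟨e, he, hdst⟩
      · exact hss (ha ▸ h)
      · exact (hs' e (hE e he)).2 hdst
  -- backward: every (s',z)-path in E' has the form e0 :: P
  have bwd : ∀ Q, IsPath E' s' z Q → ∃ P, IsPath E s z P ∧ Q = e0 :: P := by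
    rintro Q ⟨⟨hne, hE', hch, hhd, hlast⟩, hnd⟩
    obtain ⟨b, l, rfl⟩ := List.exists_cons_of_ne_nil hne
    have hb : b.src = s' := hhd b rfl
    have hbe0 : b = e0 := by
      rcases hE' b List.mem_cons_self with h | h
      · exact h
      · exact absurd hb (hs' b h).1
    subst hbe0
    obtain ⟨a, l', rfl⟩ : ∃ a l', l = a :: l' := by
      cases l with
      | nil => exact absurd (hlast e0 rfl) (by simp [e0]; exact hsz)
      | cons a l' => exact ⟨a, l', rfl⟩
    unfold List.Chain' at hch; rw [List.isChain_cons_cons] at hch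
    obtain ⟨⟨hsrc, _⟩, hch⟩ := hch
    have hsrc' : a.src = s := hsrc.symm
    have hvv : visitedVerts (e0 :: a :: l') = s' :: s :: (a :: l').map TEdge.dst := by
      simp [visitedVerts, e0]
    rw [hvv, List.nodup_cons, List.nodup_cons] at hnd
    obtain ⟨hns', hns, hnd'⟩ := hnd
    have hEmem : ∀ e ∈ (a :: l'), e ∈ E := by
      intro e he
      rcases hE' e (List.mem_cons_of_mem _ he) with h | h
      · exfalso; apply hns
        exact List.mem_map.2 ⟨e, he, by rw [h]⟩
      · exact h
    refine ⟨a :: l', ⟨⟨by simp, hEmem, hch, ?_, ?_⟩, ?_⟩, rfl⟩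
    · intro e he; simp at he; subst he; exact hsrc'
    · intro e he
      apply hlast
      rw [List.getLast?_cons_cons]; exact he
    · have : visitedVerts (a :: l') = s :: (a :: l').map TEdge.dst := by
        simp [visitedVerts, hsrc']
      rw [this, List.nodup_cons]
      exact ⟨hns, hnd'⟩
  -- value identities
  have hcost : ∀ P : List (TEdge V), wcost (e0 :: P) = wcost P := by
    intro P; simp [wcost, e0]
  have hdur : ∀ P : List (TEdge V), P ≠ [] → wdur (e0 :: P) = warr P := by
    rintro P hne
    obtain ⟨a, l, rfl⟩ := List.exists_cons_of_ne_nil hne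
    simp [wdur, warr, wstart, List.getLast?_cons_cons, e0]
  have hbij : Set.BijOn (fun P => e0 :: P) {P | IsPath E s z P} {Q | IsPath E' s' z Q} := by
    refine ⟨fun P hP => fwd P hP, fun P _ Q _ h => by simpa using h, ?_⟩
    intro Q hQ
    obtain ⟨P, hP, rfl⟩ := bwd Q hQ
    exact ⟨P, hP, rfl⟩
  refine ⟨hbij, ?_⟩
  intro P hP
  have hPne : P ≠ [] := hP.1.1
  constructor
  · rintro ⟨-, hEff⟩
    refine ⟨fwd P hP, ?_⟩
    intro Q hQ hdom
    obtain ⟨R, hR, rfl⟩ := bwd Q hQ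
    apply hEff R hR
    have hRne : R ≠ [] := hR.1.1
    rcases hdom with ⟨h1, h2⟩ | ⟨h1, h2⟩
    · exact Or.inl ⟨by rwa [hcost, hcost] at h1, by rwa [hdur R hRne, hdur P hPne] at h2⟩
    · exact Or.inr ⟨by rwa [hcost, hcost] at h1, by rwa [hdur R hRne, hdur P hPne] at h2⟩
  · rintro ⟨-, hEff⟩
    refine ⟨hP, ?_⟩
    intro Q hQ hdom
    apply hEff (e0 :: Q) (fwd Q hQ)
    have hQne : Q ≠ [] := hQ.1.1
    rcases hdom with ⟨h1, h2⟩ | ⟨h1, h2⟩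
    · exact Or.inl ⟨by rwa [hcost, hcost], by rwa [hdur Q hQne, hdur P hPne]⟩
    · exact Or.inr ⟨by rwa [hcost, hcost], by rwa [hdur Q hQne, hdur P hPne]⟩
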